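/- arXiv:2305.00520 — 3 statements merged into one kernel-verified Lean document; each statement's English description precedes it below -/
import Mathlib

section
/- Let L(a,b) = ρ(a−b) satisfy the sandwich condition with constants 0 < c1 ≤ c2. Let w_0,...,w_M be nonnegative reals with Σ_{m=0}^{M} w_m = 1, let a_0,...,a_M ∈ ℝ, set ā = Σ_{m=0}^{M} w_m a_m, and let y, g0 ∈ ℝ and A > 0 be such that |a_m − g0| ≤ A for all m. Then Σ_{m=0}^{M} w_m ( ρ(y − a_m) − ρ(y − ā) )² ≤ ( |ρ'(y − g0)| + 4 c2 A )² · Σ_{m=0}^{M} w_m (a_m − ā)². -/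
open Finset

/-- A loss `L(a,b) = ρ(a−b)` satisfies the sandwich condition with constants
`0 < c1 ≤ c2` if `ρ` is differentiable with derivative `ρ'`,
`2c1|t1−t2| ≤ |ρ'(t1)−ρ'(t2)| ≤ 2c2|t1−t2|`, and
`c1(t1−t2)² ≤ ρ(t1)−ρ(t2)−ρ'(t2)(t1−t2) ≤ c2(t1−t2)²` for all `t1, t2`. -/
def SandwichCondition (ρ ρ' : ℝ → ℝ) (c1 c2 : ℝ) : Prop :=
  (∀ t : ℝ, HasDerivAt ρ (ρ' t) t) ∧
  (∀ t1 t2 : ℝ, 2 * c1 * |t1 - t2| ≤ |ρ' t1 - ρ' t2|) ∧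
  (∀ t1 t2 : ℝ, |ρ' t1 - ρ' t2| ≤ 2 * c2 * |t1 - t2|) ∧
  (∀ t1 t2 : ℝ, c1 * (t1 - t2) ^ 2 ≤ ρ t1 - ρ t2 - ρ' t2 * (t1 - t2)) ∧
  (∀ t1 t2 : ℝ, ρ t1 - ρ t2 - ρ' t2 * (t1 - t2) ≤ c2 * (t1 - t2) ^ 2)

/-- under the sandwich condition, for nonnegative weights `w_m` summing to
one, values `a_m` with weighted average `abar`, and `y, g0, A` with `|a_m − g0| ≤ A` for all
`m`, `Σ_m w_m (ρ(y − a_m) − ρ(y − abar))² ≤ (|ρ'(y − g0)| + 4c2 A)² Σ_m w_m (a_m − abar)²`. -/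
theorem weighted_loss_variance_upper_bound (ρ ρ' : ℝ → ℝ) (c1 c2 : ℝ)
    (hc1 : 0 < c1) (hc12 : c1 ≤ c2) (hρ : SandwichCondition ρ ρ' c1 c2)
    (M : ℕ) (w : Fin (M + 1) → ℝ) (hw : ∀ m, 0 ≤ w m) (hw1 : ∑ m, w m = 1)
    (a : Fin (M + 1) → ℝ) (y g0 A : ℝ) (hA : 0 < A)
    (haA : ∀ m, |a m - g0| ≤ A) :
    ∑ m, w m * (ρ (y - a m) - ρ (y - ∑ m', w m' * a m')) ^ 2
      ≤ (|ρ' (y - g0)| + 4 * c2 * A) ^ 2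
        * ∑ m, w m * (a m - ∑ m', w m' * a m') ^ 2 := by
  obtain ⟨hderiv, hlb, hub, hqlb, hqub⟩ := hρ
  have hc2 : 0 < c2 := hc1.trans_le hc12
  set abar : ℝ := ∑ m', w m' * a m' with habareq
  -- |abar - g0| ≤ A
  have habarbound : |abar - g0| ≤ A := by
    have h1 : abar - g0 = ∑ m, w m * (a m - g0) := by
      rw [habareq]
      rw [show (∑ m, w m * (a m - g0)) = (∑ m, w m * a m) - (∑ m, w m) * g0 by
        rw [Finset.sum_mul, ← Finset.sum_sub_distrib]; exact Finset.sum_congr rfl (fun _ _ => by ring)]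
      rw [hw1]; ring
    rw [h1]
    calc |∑ m, w m * (a m - g0)| ≤ ∑ m, |w m * (a m - g0)| := Finset.abs_sum_le_sum_abs _ _
      _ ≤ ∑ m, w m * A := by
          apply Finset.sum_le_sum
          intro m _
          rw [abs_mul, abs_of_nonneg (hw m)]
          exact mul_le_mul_of_nonneg_left (haA m) (hw m)
      _ = A := by rw [← Finset.sum_mul, hw1, one_mul]
  set C : ℝ := |ρ' (y - g0)| + 4 * c2 * A with hCeq
  have hC0 : 0 ≤ C := by positivity
  -- key pointwise bound
  have key : ∀ m, |ρ (y - a m) - ρ (y - abar)| ≤ C * |a m - abar| := by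
    intro m
    set t1 : ℝ := y - a m
    set t2 : ℝ := y - abar
    have ht : t1 - t2 = abar - a m := by simp [t1, t2]
    have habs : |t1 - t2| = |a m - abar| := by rw [ht, abs_sub_comm]
    have hq : |ρ t1 - ρ t2 - ρ' t2 * (t1 - t2)| ≤ c2 * (t1 - t2) ^ 2 := by
      rw [abs_le]
      refine ⟨?_, hqub t1 t2⟩
      have := hqlb t1 t2
      nlinarith [sq_nonneg (t1 - t2)]
    have h12 : |t1 - t2| ≤ 2 * A := by
      rw [habs]
      calc |a m - abar| ≤ |a m - g0| + |g0 - abar| := abs_sub_le _ _ _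
        _ ≤ A + A := add_le_add (haA m) (by rwa [abs_sub_comm])
        _ = 2 * A := by ring
    have hd : |ρ' t2| ≤ |ρ' (y - g0)| + 2 * c2 * A := by
      have h1 : |ρ' t2 - ρ' (y - g0)| ≤ 2 * c2 * |t2 - (y - g0)| := hub t2 (y - g0)
      have h2 : |t2 - (y - g0)| = |abar - g0| := by
        rw [show t2 - (y - g0) = g0 - abar by simp [t2], abs_sub_comm]
      have h3 : |ρ' t2| ≤ |ρ' (y - g0)| + |ρ' t2 - ρ' (y - g0)| := by
        calc |ρ' t2| = |ρ' (y - g0) + (ρ' t2 - ρ' (y - g0))| := by ring_nf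
          _ ≤ _ := abs_add_le _ _
      rw [h2] at h1
      nlinarith
    calc |ρ (y - a m) - ρ (y - abar)|
        = |ρ' t2 * (t1 - t2) + (ρ t1 - ρ t2 - ρ' t2 * (t1 - t2))| := by ring_nf; rfl
      _ ≤ |ρ' t2 * (t1 - t2)| + |ρ t1 - ρ t2 - ρ' t2 * (t1 - t2)| := abs_add_le _ _
      _ ≤ |ρ' t2| * |t1 - t2| + c2 * (t1 - t2) ^ 2 := by rw [abs_mul]; linarith
      _ = (|ρ' t2| + c2 * |t1 - t2|) * |t1 - t2| := by rw [← sq_abs (t1 - t2)]; ring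
      _ ≤ C * |a m - abar| := by
          rw [habs]
          apply mul_le_mul_of_nonneg_right _ (abs_nonneg _)
          have : c2 * |t1 - t2| ≤ c2 * (2 * A) :=
            mul_le_mul_of_nonneg_left h12 hc2.le
          rw [hCeq]; nlinarith
  calc ∑ m, w m * (ρ (y - a m) - ρ (y - abar)) ^ 2
      ≤ ∑ m, w m * (C ^ 2 * (a m - abar) ^ 2) := by
        apply Finset.sum_le_sum
        intro m _
        apply mul_le_mul_of_nonneg_left _ (hw m)
        have := key m
        calc (ρ (y - a m) - ρ (y - abar)) ^ 2 = |ρ (y - a m) - ρ (y - abar)| ^ 2 := (sq_abs _).symm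
          _ ≤ (C * |a m - abar|) ^ 2 := by
              apply pow_le_pow_left₀ (abs_nonneg _) this
          _ = C ^ 2 * (a m - abar) ^ 2 := by rw [mul_pow, sq_abs]
    _ = C ^ 2 * ∑ m, w m * (a m - abar) ^ 2 := by
        rw [Finset.mul_sum]; apply Finset.sum_congr rfl; intros; ring
end

section
/- Let μ be a σ-finite measure on a measurable space and let g1, g2 be nonnegative measurable functions with ∫ g1 dμ = ∫ g2 dμ = 1 and g2 > 0 μ-almost everywhere. Then ∫ g1 log(g1/g2) dμ ≤ ∫ (g1 − g2)²/g2 dμ, with the convention 0·log 0 = 0. -/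
open MeasureTheory

/-- for probability densities `g1, g2` with respect to a σ-finite measure
`μ`, with `g2 > 0` a.e., the Kullback–Leibler divergence is bounded by the chi-squared
distance: `∫ g1 log(g1/g2) dμ ≤ ∫ (g1 − g2)²/g2 dμ`.  (The right-hand side is formalized
as a lower Lebesgue integral so that an infinite chi-squared distance is handled
correctly; the convention `0·log 0 = 0` is automatic since `Real.log 0 = 0`.) -/
theorem kl_le_chiSq {X : Type*} [MeasurableSpace X]
    (μ : Measure X) [SigmaFinite μ]
    (g1 g2 : X → ℝ) (h1 : Measurable g1) (h2 : Measurable g2)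
    (h1nn : ∀ x, 0 ≤ g1 x) (h2nn : ∀ x, 0 ≤ g2 x)
    (h1int : ∫⁻ x, ENNReal.ofReal (g1 x) ∂μ = 1)
    (h2int : ∫⁻ x, ENNReal.ofReal (g2 x) ∂μ = 1)
    (h2pos : ∀ᵐ x ∂μ, 0 < g2 x) :
    ENNReal.ofReal (∫ x, g1 x * Real.log (g1 x / g2 x) ∂μ)
      ≤ ∫⁻ x, ENNReal.ofReal ((g1 x - g2 x) ^ 2 / g2 x) ∂μ := by
  set f : X → ℝ := fun x => g1 x * Real.log (g1 x / g2 x) with hf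
  by_cases hfi : Integrable f μ
  swap
  · rw [integral_undef hfi]; simp
  by_cases hfin : ∫⁻ x, ENNReal.ofReal ((g1 x - g2 x) ^ 2 / g2 x) ∂μ = ⊤
  · rw [hfin]; exact le_top
  set h : X → ℝ := fun x => (g1 x - g2 x) ^ 2 / g2 x with hh
  have hmeas : Measurable h := ((h1.sub h2).pow_const 2).div h2
  have hhnn : ∀ x, 0 ≤ h x := fun x => div_nonneg (sq_nonneg _) (h2nn x)
  have ofReal_eq : ∀ (g : X → ℝ), (∀ x, 0 ≤ g x) →
      ∀ x, ENNReal.ofReal (g x) = (‖g x‖₊ : ENNReal) := by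
    intro g hg x
    rw [← enorm_eq_nnnorm, ← ofReal_norm, Real.norm_of_nonneg (hg x)]
  have hint_h : Integrable h μ := by
    refine ⟨hmeas.aestronglyMeasurable, ?_⟩
    rw [hasFiniteIntegral_iff_ofReal (ae_of_all _ hhnn)]
    exact lt_top_iff_ne_top.2 hfin
  have hint_g1 : Integrable g1 μ := by
    refine ⟨h1.aestronglyMeasurable, ?_⟩
    rw [hasFiniteIntegral_iff_ofReal (ae_of_all _ h1nn)]
    simp [h1int]
  have hint_g2 : Integrable g2 μ := by
    refine ⟨h2.aestronglyMeasurable, ?_⟩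
    rw [hasFiniteIntegral_iff_ofReal (ae_of_all _ h2nn)]
    simp [h2int]
  have i1 : ∫ x, g1 x ∂μ = 1 := by
    rw [integral_eq_lintegral_of_nonneg_ae (ae_of_all _ h1nn) h1.aestronglyMeasurable,
      h1int, ENNReal.toReal_one]
  have i2 : ∫ x, g2 x ∂μ = 1 := by
    rw [integral_eq_lintegral_of_nonneg_ae (ae_of_all _ h2nn) h2.aestronglyMeasurable,
      h2int, ENNReal.toReal_one]
  have key : ∀ᵐ x ∂μ, f x ≤ h x + g1 x - g2 x := by
    filter_upwards [h2pos] with x hx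
    rcases eq_or_lt_of_le (h1nn x) with hg1 | hg1
    · have : f x = 0 := by simp [hf, ← hg1]
      rw [this, hh]
      have : (g1 x - g2 x) ^ 2 / g2 x + g1 x - g2 x = 0 := by
        rw [← hg1]; field_simp; ring
      linarith
    · have hq : 0 < g1 x / g2 x := div_pos hg1 hx
      have hlog := Real.log_le_sub_one_of_pos hq
      have hmul : f x ≤ g1 x * (g1 x / g2 x - 1) :=
        mul_le_mul_of_nonneg_left hlog (h1nn x)
      have : g1 x * (g1 x / g2 x - 1) = h x + g1 x - g2 x := by
        rw [hh]; field_simp; ring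
      linarith
  have hle : ∫ x, f x ∂μ ≤ ∫ x, (h x + g1 x - g2 x) ∂μ :=
    integral_mono_ae hfi ((hint_h.add hint_g1).sub hint_g2) key
  have hI : Integrable (fun x => h x + g1 x) μ := hint_h.add hint_g1
  have : ∫ x, (h x + g1 x - g2 x) ∂μ = ∫ x, h x ∂μ := by
    rw [integral_sub hI hint_g2, integral_add hint_h hint_g1, i1, i2]
    ring
  rw [this] at hle
  calc ENNReal.ofReal (∫ x, f x ∂μ) ≤ ENNReal.ofReal (∫ x, h x ∂μ) :=
        ENNReal.ofReal_le_ofReal hle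
    _ = ∫⁻ x, ENNReal.ofReal (h x) ∂μ :=
        ofReal_integral_eq_lintegral_ofReal hint_h (ae_of_all _ hhnn)
end

section
/- Let μ be a probability distribution on ℝ^p, let g : ℝ^p → [0,1] be measurable, and let (x_1,y_1),...,(x_ñ,y_ñ) be i.i.d. with x_i ∼ μ and y_i | x_i ∼ Bernoulli(g(x_i)). Let ĝ^(0),...,ĝ^(M) be fixed measurable candidate functions with values in (0,1), and let π_0,...,π_M be prior weights with π_m > 0 and Σ_m π_m = 1. Define the exponential weights with λ = 1 and the cross-entropy loss L(y, ĝ(x)) = −y log ĝ(x) − (1−y) log(1−ĝ(x)), and set g̃_i(x) = Σ_{m=0}^{M} w_{m,i} ĝ^(m)(x) for i = 1,...,ñ. Then for every m ∈ {0,...,M}, Σ_{i=1}^{ñ} E[ D(g ‖ g̃_i) ] ≤ log(1/π_m) + ñ · D(g ‖ ĝ^(m)), where D(g ‖ h) = ∫ [ g(x) log(g(x)/h(x)) + (1−g(x)) log((1−g(x))/(1−h(x))) ] μ(dx) and the expectation is over the sample (on which the random weights w_{m,i} depend). -/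
open MeasureTheory ProbabilityTheory Finset
open scoped ENNReal

/-- The exponential weights of the ART pipeline: given prior weights `pri`, a tuning
parameter `lam`, and per-observation losses `ℓ m j` of candidate `m` at observation `j`,
`expWeight pri lam ℓ m i = pri m · exp(−λ Σ_{j<i} ℓ m j) / Σ_{m'} pri m' · exp(−λ Σ_{j<i} ℓ m' j)`.
(For the first observation the sum over `j < i` is empty, so when `Σ_m pri m = 1` this
reduces to `w_{m,1} = pri m`.) -/
noncomputable def expWeight {M n : ℕ} (pri : Fin (M + 1) → ℝ) (lam : ℝ)
    (ℓ : Fin (M + 1) → Fin n → ℝ) (m : Fin (M + 1)) (i : Fin n) : ℝ :=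
  pri m * Real.exp (-lam * ∑ j ∈ Finset.Iio i, ℓ m j) /
    ∑ m' : Fin (M + 1), pri m' * Real.exp (-lam * ∑ j ∈ Finset.Iio i, ℓ m' j)

/-- The cross-entropy loss `L(y, q) = −y log q − (1−y) log(1−q)`. -/
noncomputable def crossEntropy (y q : ℝ) : ℝ :=
  -y * Real.log q - (1 - y) * Real.log (1 - q)

/-- The Kullback–Leibler divergence `D(g‖h)` between the joint densities
`K_g(x,y) = g(x)^y (1−g(x))^{1−y}` and `K_h(x,y) = h(x)^y (1−h(x))^{1−y}` with respect
to `μ × (counting measure on {0,1})`, i.e.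
`∫ [g log(g/h) + (1−g) log((1−g)/(1−h))] dμ`, formalized as a lower Lebesgue integral
(the integrand is pointwise nonnegative, and the divergence may be infinite). -/
noncomputable def bernoulliKL {X : Type*} [MeasurableSpace X] (μ : Measure X)
    (g h : X → ℝ) : ℝ≥0∞ :=
  ∫⁻ v, ENNReal.ofReal
    (g v * Real.log (g v / h v) + (1 - g v) * Real.log ((1 - g v) / (1 - h v))) ∂μ

/-! ### Auxiliary elementary real inequalities -/

section RealLemmas

lemma gibbs_aux {g h : ℝ} (hg : 0 ≤ g) (hh : 0 < h) : g - h ≤ g * Real.log (g / h) := by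
  rcases eq_or_lt_of_le hg with hg0 | hg0
  · rw [← hg0]; simpa using hh.le
  · have hlog : Real.log (h / g) ≤ h / g - 1 := Real.log_le_sub_one_of_pos (by positivity)
    have hrw : Real.log (g / h) = - Real.log (h / g) := by
      rw [← Real.log_inv]; congr 1; field_simp
    rw [hrw]
    have h2 : g * Real.log (h / g) ≤ g * (h / g - 1) :=
      mul_le_mul_of_nonneg_left hlog hg
    have h3 : g * (h / g - 1) = h - g := by field_simp
    nlinarith

lemma klTerm_nonneg {g h : ℝ} (hg0 : 0 ≤ g) (hg1 : g ≤ 1) (h0 : 0 < h) (h1 : h < 1) :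
    0 ≤ g * Real.log (g / h) + (1 - g) * Real.log ((1 - g) / (1 - h)) := by
  have A := gibbs_aux hg0 h0
  have B := gibbs_aux (g := 1 - g) (h := 1 - h) (by linarith) (by linarith)
  linarith

lemma entTerm_nonneg {g : ℝ} (hg0 : 0 ≤ g) (hg1 : g ≤ 1) :
    0 ≤ -(g * Real.log g) - (1 - g) * Real.log (1 - g) := by
  have A : g * Real.log g ≤ 0 :=
    mul_nonpos_iff.2 (Or.inl ⟨hg0, Real.log_nonpos hg0 hg1⟩)
  have B : (1 - g) * Real.log (1 - g) ≤ 0 :=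
    mul_nonpos_iff.2 (Or.inl ⟨by linarith, Real.log_nonpos (by linarith) (by linarith)⟩)
  linarith

lemma neg_mul_log_le {t : ℝ} (ht0 : 0 ≤ t) (ht1 : t ≤ 1) : -(t * Real.log t) ≤ 1 - t := by
  rcases eq_or_lt_of_le ht0 with h | h
  · rw [← h]; simp
  · have h1 : Real.log t⁻¹ ≤ t⁻¹ - 1 := Real.log_le_sub_one_of_pos (by positivity)
    rw [Real.log_inv] at h1
    have h2 : t * (-Real.log t) ≤ t * (t⁻¹ - 1) := mul_le_mul_of_nonneg_left h1 h.le
    have h3 : t * (t⁻¹ - 1) = 1 - t := by field_simp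
    nlinarith

lemma entTerm_le_one {g : ℝ} (hg0 : 0 ≤ g) (hg1 : g ≤ 1) :
    -(g * Real.log g) - (1 - g) * Real.log (1 - g) ≤ 1 := by
  have A := neg_mul_log_le hg0 hg1
  have B := neg_mul_log_le (t := 1 - g) (by linarith) (by linarith)
  linarith

lemma mul_log_div {g h : ℝ} (hg : 0 ≤ g) (hh : 0 < h) :
    g * Real.log (g / h) = g * Real.log g - g * Real.log h := by
  rcases eq_or_lt_of_le hg with hg0 | hg0
  · rw [← hg0]; simp
  · rw [Real.log_div hg0.ne' hh.ne']; ring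

lemma klTerm_add_entTerm {g h : ℝ} (hg0 : 0 ≤ g) (hg1 : g ≤ 1) (h0 : 0 < h) (h1 : h < 1) :
    (g * Real.log (g / h) + (1 - g) * Real.log ((1 - g) / (1 - h)))
      + (-(g * Real.log g) - (1 - g) * Real.log (1 - g))
      = -(g * Real.log h) - (1 - g) * Real.log (1 - h) := by
  rw [mul_log_div hg0 h0, mul_log_div (g := 1 - g) (h := 1 - h) (by linarith) (by linarith)]
  ring

end RealLemmas

/-! ### Exponential weights and the deterministic telescoping bound -/

section Weights

variable {M n : ℕ} {pri : Fin (M + 1) → ℝ} {ℓ : Fin (M + 1) → Fin n → ℝ}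

lemma expWeight_denom_pos (hpri : ∀ m, 0 < pri m) (lam : ℝ) (i : Fin n) :
    0 < ∑ m' : Fin (M + 1), pri m' * Real.exp (-lam * ∑ j ∈ Finset.Iio i, ℓ m' j) :=
  Finset.sum_pos (fun m _ => mul_pos (hpri m) (Real.exp_pos _)) univ_nonempty

lemma expWeight_pos (hpri : ∀ m, 0 < pri m) (lam : ℝ) (m : Fin (M + 1)) (i : Fin n) :
    0 < expWeight pri lam ℓ m i :=
  div_pos (mul_pos (hpri m) (Real.exp_pos _)) (expWeight_denom_pos hpri lam i)

lemma expWeight_sum_one (hpri : ∀ m, 0 < pri m) (lam : ℝ) (i : Fin n) :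
    ∑ m : Fin (M + 1), expWeight pri lam ℓ m i = 1 := by
  unfold expWeight
  rw [← Finset.sum_div]
  exact div_self (expWeight_denom_pos (ℓ := ℓ) hpri lam i).ne'

lemma crossEntropy_nonneg {y q : ℝ} (hy : y = 0 ∨ y = 1) (h0 : 0 < q) (h1 : q < 1) :
    0 ≤ crossEntropy y q := by
  rcases hy with rfl | rfl <;> unfold crossEntropy <;> simp
  · linarith [Real.log_nonpos (by linarith : (0:ℝ) ≤ 1 - q) (by linarith : 1 - q ≤ 1)]
  · linarith [Real.log_nonpos h0.le h1.le]

lemma exp_neg_crossEntropy {y q : ℝ} (hy : y = 0 ∨ y = 1) (h0 : 0 < q) (h1 : q < 1) :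
    Real.exp (-(crossEntropy y q)) = y * q + (1 - y) * (1 - q) := by
  rcases hy with rfl | rfl <;> unfold crossEntropy <;> simp
  · exact Real.exp_log (by linarith)
  · exact Real.exp_log h0

lemma mix_mem {w G : Fin (M + 1) → ℝ} (hw : ∀ m, 0 < w m) (hw1 : ∑ m, w m = 1)
    (hG : ∀ m, G m ∈ Set.Ioo (0:ℝ) 1) :
    (∑ m, w m * G m) ∈ Set.Ioo (0:ℝ) 1 := by
  constructor
  · exact Finset.sum_pos (fun m _ => mul_pos (hw m) (hG m).1) univ_nonempty
  · calc ∑ m, w m * G m < ∑ m, w m :=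
          Finset.sum_lt_sum_of_nonempty univ_nonempty
            (fun m _ => by nlinarith [(hG m).2, hw m])
      _ = 1 := hw1

lemma exp_neg_crossEntropy_mix {y : ℝ} (hy : y = 0 ∨ y = 1)
    {w G : Fin (M + 1) → ℝ} (hw : ∀ m, 0 < w m) (hw1 : ∑ m, w m = 1)
    (hG : ∀ m, G m ∈ Set.Ioo (0:ℝ) 1) :
    Real.exp (-(crossEntropy y (∑ m, w m * G m)))
      = ∑ m, w m * Real.exp (-(crossEntropy y (G m))) := by
  obtain ⟨hq0, hq1⟩ := mix_mem hw hw1 hG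
  rw [exp_neg_crossEntropy hy hq0 hq1]
  have : ∀ m ∈ Finset.univ, w m * Real.exp (-(crossEntropy y (G m)))
      = y * (w m * G m) + ((1 - y) * w m - (1 - y) * (w m * G m)) := by
    intro m _
    rw [exp_neg_crossEntropy hy (hG m).1 (hG m).2]; ring
  rw [Finset.sum_congr rfl this, Finset.sum_add_distrib, ← Finset.mul_sum,
    Finset.sum_sub_distrib, ← Finset.mul_sum, ← Finset.mul_sum, hw1]
  ring

/-- partial-sum normalizing constants of the exponential-weights scheme -/
noncomputable def Tfun {M n : ℕ} (pri : Fin (M + 1) → ℝ) (ℓ : Fin (M + 1) → Fin n → ℝ)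
    (k : ℕ) : ℝ :=
  ∑ m' : Fin (M + 1), pri m' *
    Real.exp (-(∑ j ∈ Finset.univ.filter (fun j : Fin n => (j : ℕ) < k), ℓ m' j))

lemma Tfun_pos (hpri : ∀ m, 0 < pri m) (k : ℕ) : 0 < Tfun pri ℓ k :=
  Finset.sum_pos (fun m _ => mul_pos (hpri m) (Real.exp_pos _)) univ_nonempty

lemma filter_lt_val (i : Fin n) :
    Finset.univ.filter (fun j : Fin n => (j : ℕ) < (i : ℕ)) = Finset.Iio i := by
  ext j
  simp only [Finset.mem_filter, Finset.mem_univ, true_and, Finset.mem_Iio, Fin.lt_def]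

lemma filter_lt_val_succ (i : Fin n) :
    Finset.univ.filter (fun j : Fin n => (j : ℕ) < (i : ℕ) + 1)
      = insert i (Finset.Iio i) := by
  ext j
  simp only [Finset.mem_filter, Finset.mem_univ, true_and, Finset.mem_insert,
    Finset.mem_Iio, Fin.lt_def]
  omega

lemma exp_neg_sum_weights (hpri : ∀ m, 0 < pri m) (i : Fin n) :
    ∑ m, expWeight pri 1 ℓ m i * Real.exp (-(ℓ m i))
      = Tfun pri ℓ ((i : ℕ) + 1) / Tfun pri ℓ (i : ℕ) := by
  unfold expWeight Tfun
  rw [filter_lt_val, filter_lt_val_succ]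
  have key : ∀ m ∈ (Finset.univ : Finset (Fin (M + 1))),
      (pri m * Real.exp (-1 * ∑ j ∈ Finset.Iio i, ℓ m j) /
        ∑ m' : Fin (M + 1), pri m' * Real.exp (-1 * ∑ j ∈ Finset.Iio i, ℓ m' j)) *
          Real.exp (-(ℓ m i))
      = pri m * Real.exp (-(∑ j ∈ insert i (Finset.Iio i), ℓ m j)) /
        ∑ m' : Fin (M + 1), pri m' * Real.exp (-1 * ∑ j ∈ Finset.Iio i, ℓ m' j) := by
    intro m _
    rw [div_mul_eq_mul_div, mul_assoc, ← Real.exp_add, Finset.sum_insert (by simp)]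
    have harg : -1 * ∑ j ∈ Finset.Iio i, ℓ m j + -(ℓ m i)
        = -(ℓ m i + ∑ j ∈ Finset.Iio i, ℓ m j) := by ring
    rw [harg]
  rw [Finset.sum_congr rfl key, ← Finset.sum_div]
  congr 1
  refine Finset.sum_congr rfl fun m' _ => ?_
  congr 2
  ring

/-- The deterministic progressive-mixture telescoping bound. -/
lemma telescope (hpri : ∀ m, 0 < pri m) (hpri1 : ∑ m, pri m = 1)
    (q : Fin n → ℝ)
    (hq : ∀ i, Real.exp (-(q i)) = ∑ m, expWeight pri 1 ℓ m i * Real.exp (-(ℓ m i)))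
    (m : Fin (M + 1)) :
    ∑ i, q i ≤ Real.log (1 / pri m) + ∑ i, ℓ m i := by
  have hT := Tfun_pos (ℓ := ℓ) (n := n) hpri
  have hqi : ∀ i : Fin n, q i
      = Real.log (Tfun pri ℓ (i : ℕ)) - Real.log (Tfun pri ℓ ((i : ℕ) + 1)) := by
    intro i
    have h1 : Real.exp (-(q i)) = Tfun pri ℓ ((i : ℕ) + 1) / Tfun pri ℓ (i : ℕ) :=
      (hq i).trans (exp_neg_sum_weights hpri i)
    have h2 : -(q i) = Real.log (Tfun pri ℓ ((i : ℕ) + 1) / Tfun pri ℓ (i : ℕ)) := by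
      rw [← h1, Real.log_exp]
    rw [Real.log_div (hT _).ne' (hT _).ne'] at h2
    linarith
  have hsum : ∑ i, q i = Real.log (Tfun pri ℓ 0) - Real.log (Tfun pri ℓ n) := by
    calc ∑ i : Fin n, q i
        = ∑ i : Fin n, (Real.log (Tfun pri ℓ (i : ℕ))
            - Real.log (Tfun pri ℓ ((i : ℕ) + 1))) := Finset.sum_congr rfl fun i _ => hqi i
      _ = ∑ k ∈ Finset.range n, (Real.log (Tfun pri ℓ k)
            - Real.log (Tfun pri ℓ (k + 1))) :=
          Fin.sum_univ_eq_sum_range (fun k => Real.log (Tfun pri ℓ k)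
            - Real.log (Tfun pri ℓ (k + 1))) n
      _ = _ := Finset.sum_range_sub' (fun k => Real.log (Tfun pri ℓ k)) n
  have hT0 : Tfun pri ℓ 0 = 1 := by
    have hemp : (Finset.univ.filter (fun j : Fin n => (j : ℕ) < 0)) = ∅ := by
      ext j; simp
    unfold Tfun
    rw [hemp]
    simp [hpri1]
  have hTn : Tfun pri ℓ n = ∑ m', pri m' * Real.exp (-(∑ j, ℓ m' j)) := by
    have huniv : (Finset.univ.filter (fun j : Fin n => (j : ℕ) < n)) = Finset.univ :=
      Finset.filter_true_of_mem (fun j _ => j.isLt)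
    unfold Tfun
    rw [huniv]
  have hge : pri m * Real.exp (-(∑ j, ℓ m j)) ≤ Tfun pri ℓ n := by
    rw [hTn]
    exact Finset.single_le_sum
      (f := fun m' => pri m' * Real.exp (-(∑ j, ℓ m' j)))
      (fun m' _ => le_of_lt (mul_pos (hpri m') (Real.exp_pos _))) (Finset.mem_univ m)
  have hlog : Real.log (pri m) + -(∑ j, ℓ m j) ≤ Real.log (Tfun pri ℓ n) := by
    have := Real.log_le_log (mul_pos (hpri m) (Real.exp_pos _)) hge
    rwa [Real.log_mul (hpri m).ne' (Real.exp_pos _).ne', Real.log_exp] at this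
  rw [hsum, hT0, Real.log_one, one_div, Real.log_inv]
  linarith

end Weights

/-! ### Measure-theoretic core lemmas -/

section MeasureLemmas

variable {Ω : Type*} [MeasurableSpace Ω] {P : Measure Ω} [IsProbabilityMeasure P]
  {X : Type*} [MeasurableSpace X] {μ : Measure X} [IsProbabilityMeasure μ]
  {g : X → ℝ} {x : Ω → X} {y : Ω → ℝ}

omit [IsProbabilityMeasure μ] in
lemma map_restrict_eq_withDensity
    (hgmeas : Measurable g) (hg01 : ∀ v, g v ∈ Set.Icc (0 : ℝ) 1)
    (hx : Measurable x) (hy : Measurable y)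
    (hxlaw : Measure.map x P = μ)
    (hy01 : ∀ ω, y ω = 0 ∨ y ω = 1)
    (hycond : P[y | MeasurableSpace.comap x inferInstance] =ᵐ[P] fun ω => g (x ω)) :
    Measure.map x (P.restrict {ω | y ω = 1})
      = μ.withDensity (fun v => ENNReal.ofReal (g v)) := by
  have hm : MeasurableSpace.comap x inferInstance ≤ ‹MeasurableSpace Ω› := hx.comap_le
  have hA : MeasurableSet {ω | y ω = 1} := hy (measurableSet_singleton 1)
  have hyint : Integrable y P := by
    refine ⟨hy.aestronglyMeasurable, ?_⟩
    refine HasFiniteIntegral.of_bounded (C := 1) (Filter.Eventually.of_forall fun ω => ?_)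
    rcases hy01 ω with h | h <;> simp [h]
  ext t ht
  rw [Measure.map_apply hx ht, Measure.restrict_apply (hx ht),
    withDensity_apply _ ht]
  have hs : MeasurableSet[MeasurableSpace.comap x inferInstance] (x ⁻¹' t) := ⟨t, ht, rfl⟩
  have hsmeas : MeasurableSet (x ⁻¹' t) := hx ht
  have h1 : ∫ ω in x ⁻¹' t, y ω ∂P = (P (x ⁻¹' t ∩ {ω | y ω = 1})).toReal := by
    have hyind : y = Set.indicator {ω | y ω = 1} (fun _ => (1 : ℝ)) := by
      funext ω
      rcases hy01 ω with h | h
      · rw [Set.indicator_of_notMem (by simp [h]), h]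
      · rw [Set.indicator_of_mem (by simpa using h), h]
    rw [hyind, integral_indicator hA]
    simp [Measure.restrict_restrict hA, Set.inter_comm]
    rfl
  have h2 : ∫ ω in x ⁻¹' t, y ω ∂P = ∫ ω in x ⁻¹' t, g (x ω) ∂P := by
    rw [← setIntegral_condExp hm hyint hs]
    exact setIntegral_congr_ae hsmeas (hycond.mono fun ω h _ => h)
  have h3 : ∫ ω in x ⁻¹' t, g (x ω) ∂P
      = (∫⁻ ω in x ⁻¹' t, ENNReal.ofReal (g (x ω)) ∂P).toReal := by
    rw [integral_eq_lintegral_of_nonneg_ae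
      (Filter.Eventually.of_forall fun ω => (hg01 (x ω)).1)
      ((hgmeas.comp hx).aestronglyMeasurable.restrict)]
  have h4 : ∫⁻ ω in x ⁻¹' t, ENNReal.ofReal (g (x ω)) ∂P
      = ∫⁻ v in t, ENNReal.ofReal (g v) ∂μ := by
    rw [← hxlaw,
      setLIntegral_map ht (f := fun v => ENNReal.ofReal (g v))
        hgmeas.ennreal_ofReal hx]
  have hfin1 : P (x ⁻¹' t ∩ {ω | y ω = 1}) ≠ ⊤ := measure_ne_top _ _
  have hfin2 : ∫⁻ ω in x ⁻¹' t, ENNReal.ofReal (g (x ω)) ∂P ≠ ⊤ := by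
    refine ne_top_of_le_ne_top (measure_ne_top P (x ⁻¹' t)) ?_
    calc ∫⁻ ω in x ⁻¹' t, ENNReal.ofReal (g (x ω)) ∂P
        ≤ ∫⁻ _ω in x ⁻¹' t, 1 ∂P := lintegral_mono fun ω => by
          simpa using ENNReal.ofReal_le_one.2 (hg01 (x ω)).2
      _ = P (x ⁻¹' t) := by simp
  rw [← h4]
  have := h1.symm.trans (h2.trans h3)
  exact (ENNReal.toReal_eq_toReal_iff' hfin1 hfin2).mp this

omit [IsProbabilityMeasure μ] in
lemma map_restrict_eq_withDensity'
    (hgmeas : Measurable g) (hg01 : ∀ v, g v ∈ Set.Icc (0 : ℝ) 1)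
    (hx : Measurable x) (hy : Measurable y)
    (hxlaw : Measure.map x P = μ)
    (hy01 : ∀ ω, y ω = 0 ∨ y ω = 1)
    (hycond : P[y | MeasurableSpace.comap x inferInstance] =ᵐ[P] fun ω => g (x ω)) :
    Measure.map x (P.restrict {ω | y ω = 0})
      = μ.withDensity (fun v => ENNReal.ofReal (1 - g v)) := by
  have hm : MeasurableSpace.comap x inferInstance ≤ ‹MeasurableSpace Ω› := hx.comap_le
  have hyint : Integrable y P := by
    refine ⟨hy.aestronglyMeasurable, ?_⟩
    refine HasFiniteIntegral.of_bounded (C := 1) (Filter.Eventually.of_forall fun ω => ?_)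
    rcases hy01 ω with h | h <;> simp [h]
  have hcond' : P[(fun ω => 1 - y ω) | MeasurableSpace.comap x inferInstance]
      =ᵐ[P] fun ω => 1 - g (x ω) := by
    have heq : (fun ω => 1 - y ω) = (fun _ => (1:ℝ)) - y := rfl
    rw [heq]
    filter_upwards [condExp_sub (μ := P) (m := MeasurableSpace.comap x inferInstance)
      (integrable_const (1:ℝ)) hyint, hycond] with ω h1 h2
    rw [h1, Pi.sub_apply, condExp_const hm, h2]
  have h := map_restrict_eq_withDensity (g := fun v => 1 - g v) (y := fun ω => 1 - y ω)
    (measurable_const.sub hgmeas)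
    (fun v => by
      simp only [Set.mem_Icc]
      constructor <;> linarith [(hg01 v).1, (hg01 v).2])
    hx (measurable_const.sub hy) hxlaw
    (fun ω => by rcases hy01 ω with h | h <;> simp [h]) hcond'
  have hset : {ω | 1 - y ω = 1} = {ω | y ω = 0} := by
    ext ω; simp only [Set.mem_setOf_eq, sub_eq_self]
  rwa [hset] at h

lemma lintegral_y_mul (hgmeas : Measurable g) (hg01 : ∀ v, g v ∈ Set.Icc (0 : ℝ) 1)
    (hx : Measurable x) (hy : Measurable y)
    (hxlaw : Measure.map x P = μ)
    (hy01 : ∀ ω, y ω = 0 ∨ y ω = 1)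
    (hycond : P[y | MeasurableSpace.comap x inferInstance] =ᵐ[P] fun ω => g (x ω))
    {F : X → ℝ≥0∞} (hF : Measurable F) :
    ∫⁻ ω, ENNReal.ofReal (y ω) * F (x ω) ∂P
      = ∫⁻ v, ENNReal.ofReal (g v) * F v ∂μ := by
  have hA : MeasurableSet {ω | y ω = 1} := hy (measurableSet_singleton 1)
  have hind : (fun ω => ENNReal.ofReal (y ω) * F (x ω))
      = Set.indicator {ω | y ω = 1} (fun ω => F (x ω)) := by
    funext ω
    rcases hy01 ω with h | h
    · rw [Set.indicator_of_notMem (by simp [h]), h]; simp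
    · rw [Set.indicator_of_mem (by simpa using h), h]; simp
  rw [hind, lintegral_indicator hA, ← lintegral_map hF hx,
    map_restrict_eq_withDensity hgmeas hg01 hx hy hxlaw hy01 hycond,
    lintegral_withDensity_eq_lintegral_mul _ (f := fun v => ENNReal.ofReal (g v))
      hgmeas.ennreal_ofReal hF]
  rfl

lemma lintegral_one_sub_y_mul (hgmeas : Measurable g) (hg01 : ∀ v, g v ∈ Set.Icc (0 : ℝ) 1)
    (hx : Measurable x) (hy : Measurable y)
    (hxlaw : Measure.map x P = μ)
    (hy01 : ∀ ω, y ω = 0 ∨ y ω = 1)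
    (hycond : P[y | MeasurableSpace.comap x inferInstance] =ᵐ[P] fun ω => g (x ω))
    {F : X → ℝ≥0∞} (hF : Measurable F) :
    ∫⁻ ω, ENNReal.ofReal (1 - y ω) * F (x ω) ∂P
      = ∫⁻ v, ENNReal.ofReal (1 - g v) * F v ∂μ := by
  have hA : MeasurableSet {ω | y ω = 0} := hy (measurableSet_singleton 0)
  have hind : (fun ω => ENNReal.ofReal (1 - y ω) * F (x ω))
      = Set.indicator {ω | y ω = 0} (fun ω => F (x ω)) := by
    funext ω
    rcases hy01 ω with h | h
    · rw [Set.indicator_of_mem (by simpa using h), h]; simp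
    · rw [Set.indicator_of_notMem (by simp [h]), h]; simp
  rw [hind, lintegral_indicator hA, ← lintegral_map hF hx,
    map_restrict_eq_withDensity' hgmeas hg01 hx hy hxlaw hy01 hycond,
    lintegral_withDensity_eq_lintegral_mul _ (f := fun v => ENNReal.ofReal (1 - g v))
      (measurable_const.sub hgmeas).ennreal_ofReal hF]
  rfl

/-- CORE: the expected cross-entropy loss of a fixed predictor equals its
expected cross-entropy risk under `μ`. -/
lemma core_crossEntropy (hgmeas : Measurable g) (hg01 : ∀ v, g v ∈ Set.Icc (0 : ℝ) 1)
    (hx : Measurable x) (hy : Measurable y)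
    (hxlaw : Measure.map x P = μ)
    (hy01 : ∀ ω, y ω = 0 ∨ y ω = 1)
    (hycond : P[y | MeasurableSpace.comap x inferInstance] =ᵐ[P] fun ω => g (x ω))
    {h : X → ℝ} (hh : Measurable h) (hh01 : ∀ v, h v ∈ Set.Ioo (0 : ℝ) 1) :
    ∫⁻ ω, ENNReal.ofReal (crossEntropy (y ω) (h (x ω))) ∂P
      = ∫⁻ v, ENNReal.ofReal
          (-(g v * Real.log (h v)) - (1 - g v) * Real.log (1 - h v)) ∂μ := by
  have hsplit : ∀ ω, ENNReal.ofReal (crossEntropy (y ω) (h (x ω)))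
      = ENNReal.ofReal (y ω) * ENNReal.ofReal (-Real.log (h (x ω)))
        + ENNReal.ofReal (1 - y ω) * ENNReal.ofReal (-Real.log (1 - h (x ω))) := by
    intro ω
    rcases hy01 ω with h0 | h0 <;> rw [h0] <;> unfold crossEntropy <;> simp
  have hF1 : Measurable fun v => ENNReal.ofReal (-Real.log (h v)) :=
    (Real.measurable_log.comp hh).neg.ennreal_ofReal
  have hF2 : Measurable fun v => ENNReal.ofReal (-Real.log (1 - h v)) :=
    (Real.measurable_log.comp (measurable_const.sub hh)).neg.ennreal_ofReal
  calc ∫⁻ ω, ENNReal.ofReal (crossEntropy (y ω) (h (x ω))) ∂P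
      = ∫⁻ ω, (ENNReal.ofReal (y ω) * ENNReal.ofReal (-Real.log (h (x ω)))
        + ENNReal.ofReal (1 - y ω) * ENNReal.ofReal (-Real.log (1 - h (x ω)))) ∂P :=
        lintegral_congr hsplit
    _ = (∫⁻ ω, ENNReal.ofReal (y ω) * ENNReal.ofReal (-Real.log (h (x ω))) ∂P)
        + ∫⁻ ω, ENNReal.ofReal (1 - y ω) * ENNReal.ofReal (-Real.log (1 - h (x ω))) ∂P :=
        lintegral_add_left (hy.ennreal_ofReal.mul ((hF1.comp hx))) _
    _ = (∫⁻ v, ENNReal.ofReal (g v) * ENNReal.ofReal (-Real.log (h v)) ∂μ)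
        + ∫⁻ v, ENNReal.ofReal (1 - g v) * ENNReal.ofReal (-Real.log (1 - h v)) ∂μ := by
        rw [lintegral_y_mul hgmeas hg01 hx hy hxlaw hy01 hycond hF1,
          lintegral_one_sub_y_mul hgmeas hg01 hx hy hxlaw hy01 hycond hF2]
    _ = ∫⁻ v, (ENNReal.ofReal (g v) * ENNReal.ofReal (-Real.log (h v))
        + ENNReal.ofReal (1 - g v) * ENNReal.ofReal (-Real.log (1 - h v))) ∂μ :=
        (lintegral_add_left (hgmeas.ennreal_ofReal.mul hF1) _).symm
    _ = ∫⁻ v, ENNReal.ofReal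
          (-(g v * Real.log (h v)) - (1 - g v) * Real.log (1 - h v)) ∂μ := by
        refine lintegral_congr fun v => ?_
        have hv0 := (hg01 v).1
        have hv1 := (hg01 v).2
        have hl1 : 0 ≤ -Real.log (h v) := by
          have := Real.log_nonpos (hh01 v).1.le (hh01 v).2.le; linarith
        have hl2 : 0 ≤ -Real.log (1 - h v) := by
          have := Real.log_nonpos (by linarith [(hh01 v).2] : (0:ℝ) ≤ 1 - h v)
            (by linarith [(hh01 v).1] : 1 - h v ≤ 1)
          linarith
        rw [← ENNReal.ofReal_mul hv0, ← ENNReal.ofReal_mul (by linarith : (0:ℝ) ≤ 1 - g v),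
          ← ENNReal.ofReal_add (mul_nonneg hv0 hl1)
            (mul_nonneg (by linarith : (0:ℝ) ≤ 1 - g v) hl2)]
        ring_nf

end MeasureLemmas

/-! ### ENNReal gluing lemmas -/

lemma kl_add_ent {X : Type*} [MeasurableSpace X] (μ : Measure X)
    (g : X → ℝ) (hgmeas : Measurable g) (hg01 : ∀ v, g v ∈ Set.Icc (0:ℝ) 1)
    (h : X → ℝ) (hh01 : ∀ v, h v ∈ Set.Ioo (0:ℝ) 1) :
    bernoulliKL μ g h
        + ∫⁻ v, ENNReal.ofReal (-(g v * Real.log (g v)) - (1 - g v) * Real.log (1 - g v)) ∂μ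
      = ∫⁻ v, ENNReal.ofReal (-(g v * Real.log (h v)) - (1 - g v) * Real.log (1 - h v)) ∂μ := by
  have hent : Measurable fun v =>
      ENNReal.ofReal (-(g v * Real.log (g v)) - (1 - g v) * Real.log (1 - g v)) :=
    (((hgmeas.mul (Real.measurable_log.comp hgmeas)).neg).sub
      ((measurable_const.sub hgmeas).mul
        (Real.measurable_log.comp (measurable_const.sub hgmeas)))).ennreal_ofReal
  rw [bernoulliKL, ← lintegral_add_right _ hent]
  refine lintegral_congr fun v => ?_
  rw [← ENNReal.ofReal_add
    (klTerm_nonneg (hg01 v).1 (hg01 v).2 (hh01 v).1 (hh01 v).2)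
    (entTerm_nonneg (hg01 v).1 (hg01 v).2),
    klTerm_add_entTerm (hg01 v).1 (hg01 v).2 (hh01 v).1 (hh01 v).2]

lemma ent_lintegral_le_one {X : Type*} [MeasurableSpace X] (μ : Measure X)
    [IsProbabilityMeasure μ] (g : X → ℝ) (hg01 : ∀ v, g v ∈ Set.Icc (0:ℝ) 1) :
    (∫⁻ v, ENNReal.ofReal (-(g v * Real.log (g v)) - (1 - g v) * Real.log (1 - g v)) ∂μ) ≤ 1 := by
  calc ∫⁻ v, ENNReal.ofReal (-(g v * Real.log (g v)) - (1 - g v) * Real.log (1 - g v)) ∂μ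
      ≤ ∫⁻ _v, 1 ∂μ := lintegral_mono fun v => by
        simpa using ENNReal.ofReal_le_one.2 (entTerm_le_one (hg01 v).1 (hg01 v).2)
    _ = 1 := by simp

lemma sum_lintegral_le {α ι : Type*} [MeasurableSpace α] (μ : Measure α)
    (s : Finset ι) (f : ι → α → ℝ≥0∞) :
    ∑ i ∈ s, ∫⁻ a, f i a ∂μ ≤ ∫⁻ a, ∑ i ∈ s, f i a ∂μ := by
  classical
  induction s using Finset.induction with
  | empty => simp
  | insert j s' hnotmem ih =>
      rw [Finset.sum_insert hnotmem]
      calc ∫⁻ a, f j a ∂μ + ∑ i ∈ s', ∫⁻ a, f i a ∂μ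
          ≤ ∫⁻ a, f j a ∂μ + ∫⁻ a, ∑ i ∈ s', f i a ∂μ := add_le_add_right ih _
        _ ≤ ∫⁻ a, (f j a + ∑ i ∈ s', f i a) ∂μ := le_lintegral_add _ _
        _ = ∫⁻ a, ∑ i ∈ insert j s', f i a ∂μ :=
            lintegral_congr fun a => (Finset.sum_insert (f := fun i => f i a) hnotmem).symm

lemma measurable_crossEntropy' : Measurable fun q : ℝ × ℝ => crossEntropy q.1 q.2 :=
  ((measurable_fst.neg.mul (Real.measurable_log.comp measurable_snd)).sub
    ((measurable_const.sub measurable_fst).mul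
      (Real.measurable_log.comp (measurable_const.sub measurable_snd))))

/-! ### Mixture predictors built from a tuple of past observations -/

section MixK

variable {X : Type*} [MeasurableSpace X] {M : ℕ} {κ : Type*} [Fintype κ]

/-- cumulative loss of candidate `m'` on the tuple of observations `w` -/
noncomputable def wSumK (ghat : Fin (M + 1) → X → ℝ) (w : κ → X × ℝ) (m' : Fin (M + 1)) : ℝ :=
  ∑ j : κ, crossEntropy (w j).2 (ghat m' (w j).1)

/-- exponential weight of candidate `m'` given the tuple of observations `w` -/
noncomputable def wtK (pri : Fin (M + 1) → ℝ) (ghat : Fin (M + 1) → X → ℝ)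
    (w : κ → X × ℝ) (m' : Fin (M + 1)) : ℝ :=
  pri m' * Real.exp (-1 * wSumK ghat w m') /
    ∑ m'' : Fin (M + 1), pri m'' * Real.exp (-1 * wSumK ghat w m'')

/-- the mixture predictor given the tuple of observations `w` -/
noncomputable def mixK (pri : Fin (M + 1) → ℝ) (ghat : Fin (M + 1) → X → ℝ)
    (w : κ → X × ℝ) (v : X) : ℝ :=
  ∑ m' : Fin (M + 1), wtK pri ghat w m' * ghat m' v

variable {pri : Fin (M + 1) → ℝ} {ghat : Fin (M + 1) → X → ℝ}

lemma wtK_pos (hpri : ∀ m, 0 < pri m) (w : κ → X × ℝ) (m' : Fin (M + 1)) :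
    0 < wtK pri ghat w m' :=
  div_pos (mul_pos (hpri m') (Real.exp_pos _))
    (Finset.sum_pos (fun m _ => mul_pos (hpri m) (Real.exp_pos _)) univ_nonempty)

lemma wtK_sum_one (hpri : ∀ m, 0 < pri m) (w : κ → X × ℝ) :
    ∑ m' : Fin (M + 1), wtK pri ghat w m' = 1 := by
  unfold wtK
  rw [← Finset.sum_div]
  exact div_self
    (Finset.sum_pos (fun m _ => mul_pos (hpri m) (Real.exp_pos _)) univ_nonempty).ne'

lemma mixK_mem (hpri : ∀ m, 0 < pri m) (hghatr : ∀ m v, ghat m v ∈ Set.Ioo (0:ℝ) 1)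
    (w : κ → X × ℝ) (v : X) : mixK pri ghat w v ∈ Set.Ioo (0:ℝ) 1 :=
  mix_mem (fun m' => wtK_pos hpri w m') (wtK_sum_one hpri w) (fun m' => hghatr m' v)

lemma measurable_wSumK (hghat : ∀ m, Measurable (ghat m)) (m' : Fin (M + 1)) :
    Measurable fun w : κ → X × ℝ => wSumK ghat w m' := by
  unfold wSumK
  refine Finset.measurable_sum _ fun j _ => ?_
  exact measurable_crossEntropy'.comp
    (((measurable_pi_apply j).snd).prodMk ((hghat m').comp (measurable_pi_apply j).fst))

lemma measurable_wtK (hghat : ∀ m, Measurable (ghat m)) (m' : Fin (M + 1)) :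
    Measurable fun w : κ → X × ℝ => wtK pri ghat w m' := by
  unfold wtK
  refine Measurable.div ?_ ?_
  · exact (Real.measurable_exp.comp ((measurable_wSumK hghat m').const_mul (-1))).const_mul _
  · exact Finset.measurable_sum _ fun m'' _ =>
      (Real.measurable_exp.comp ((measurable_wSumK hghat m'').const_mul (-1))).const_mul _

lemma measurable_mixK (hghat : ∀ m, Measurable (ghat m)) :
    Measurable fun q : (κ → X × ℝ) × X => mixK pri ghat q.1 q.2 := by
  unfold mixK
  refine Finset.measurable_sum _ fun m' _ => ?_
  exact ((measurable_wtK hghat m').comp measurable_fst).mul ((hghat m').comp measurable_snd)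

end MixK

set_option maxHeartbeats 1000000 in
/-- the progressive-mixture Kullback–Leibler oracle inequality, the main
intermediate result in the proof of Theorem 2.  With i.i.d. pairs `(x i, y i)`,
`x i ∼ μ`, `y i | x i ∼ Bernoulli(g(x i))` (encoded by `y i ∈ {0,1}` and
`E[y i | x i] = g(x i)` a.s.), candidates `ĝ^{(m)}` with values in `(0,1)`, priors
`π_m > 0` summing to one, exponential weights with `λ = 1` and cross-entropy loss, and
`g̃_i = Σ_m w_{m,i} ĝ^{(m)}`, one has for every `m`,
`Σ_{i=1}^{ñ} E[D(g‖g̃_i)] ≤ log(1/π_m) + ñ·D(g‖ĝ^{(m)})`. -/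
theorem progressive_mixture_kl_oracle
    {Ω : Type*} [MeasurableSpace Ω] (P : Measure Ω) [IsProbabilityMeasure P]
    (p n M : ℕ) (hn : 1 ≤ n)
    (μ : Measure (Fin p → ℝ)) [IsProbabilityMeasure μ]
    (g : (Fin p → ℝ) → ℝ) (hgmeas : Measurable g)
    (hg01 : ∀ v, g v ∈ Set.Icc (0 : ℝ) 1)
    (x : Fin n → Ω → (Fin p → ℝ)) (y : Fin n → Ω → ℝ)
    (hxmeas : ∀ i, Measurable (x i)) (hymeas : ∀ i, Measurable (y i))
    (hxlaw : ∀ i, Measure.map (x i) P = μ)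
    (hy01 : ∀ i ω, y i ω = 0 ∨ y i ω = 1)
    (hycond : ∀ i,
      P[y i | MeasurableSpace.comap (x i) inferInstance] =ᵐ[P] fun ω => g (x i ω))
    (hindep : iIndepFun (fun i ω => (x i ω, y i ω)) P)
    (hident : ∀ i j, Measure.map (fun ω => (x i ω, y i ω)) P
        = Measure.map (fun ω => (x j ω, y j ω)) P)
    (ghat : Fin (M + 1) → (Fin p → ℝ) → ℝ) (hghatmeas : ∀ m, Measurable (ghat m))
    (hghatr : ∀ m v, ghat m v ∈ Set.Ioo (0 : ℝ) 1)
    (pri : Fin (M + 1) → ℝ) (hpri : ∀ m, 0 < pri m) (hpri1 : ∑ m, pri m = 1) :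
    ∀ m : Fin (M + 1),
      ∑ i : Fin n,
          ∫⁻ ω, bernoulliKL μ g
            (fun v => ∑ m' : Fin (M + 1),
              expWeight pri 1
                (fun m'' j => crossEntropy (y j ω) (ghat m'' (x j ω))) m' i
                * ghat m' v) ∂P
        ≤ ENNReal.ofReal (Real.log (1 / pri m)) + n * bernoulliKL μ g (ghat m) := by
  intro m
  classical
  -- basic facts
  have hple : pri m ≤ 1 := by
    rw [← hpri1]
    exact Finset.single_le_sum (fun m' _ => (hpri m').le) (Finset.mem_univ m)
  have hlog_nonneg : 0 ≤ Real.log (1 / pri m) := by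
    rw [one_div, Real.log_inv]
    linarith [Real.log_nonpos (hpri m).le hple]
  have hmix01 : ∀ (i : Fin n) (ω : Ω) v,
      (∑ m' : Fin (M + 1),
        expWeight pri 1 (fun m'' j => crossEntropy (y j ω) (ghat m'' (x j ω))) m' i
          * ghat m' v) ∈ Set.Ioo (0 : ℝ) 1 :=
    fun i ω v => mix_mem (fun m' => expWeight_pos hpri 1 m' i)
      (expWeight_sum_one hpri 1 i) (fun m' => hghatr m' v)
  -- Step 1: KL + entropy = cross-entropy risk, pointwise in ω
  have hstep1 : ∀ (i : Fin n) (ω : Ω),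
      bernoulliKL μ g (fun v => ∑ m' : Fin (M + 1),
          expWeight pri 1 (fun m'' j => crossEntropy (y j ω) (ghat m'' (x j ω))) m' i
            * ghat m' v)
        + ∫⁻ v, ENNReal.ofReal
            (-(g v * Real.log (g v)) - (1 - g v) * Real.log (1 - g v)) ∂μ
      = ∫⁻ v, ENNReal.ofReal
          (-(g v * Real.log (∑ m' : Fin (M + 1),
              expWeight pri 1 (fun m'' j => crossEntropy (y j ω) (ghat m'' (x j ω))) m' i
                * ghat m' v))
            - (1 - g v) * Real.log (1 - ∑ m' : Fin (M + 1),
              expWeight pri 1 (fun m'' j => crossEntropy (y j ω) (ghat m'' (x j ω))) m' i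
                * ghat m' v)) ∂μ :=
    fun i ω => kl_add_ent μ g hgmeas hg01 _ (hmix01 i ω)
  -- Step 2: the independence/Fubini step
  have key : ∀ i : Fin n,
      (∫⁻ ω, ∫⁻ v, ENNReal.ofReal
          (-(g v * Real.log (∑ m' : Fin (M + 1),
              expWeight pri 1 (fun m'' j => crossEntropy (y j ω) (ghat m'' (x j ω))) m' i
                * ghat m' v))
            - (1 - g v) * Real.log (1 - ∑ m' : Fin (M + 1),
              expWeight pri 1 (fun m'' j => crossEntropy (y j ω) (ghat m'' (x j ω))) m' i
                * ghat m' v)) ∂μ ∂P)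
      = ∫⁻ ω, ENNReal.ofReal (crossEntropy (y i ω)
          (∑ m' : Fin (M + 1),
            expWeight pri 1 (fun m'' j => crossEntropy (y j ω) (ghat m'' (x j ω))) m' i
              * ghat m' (x i ω))) ∂P := by
    intro i
    have hfact : ∀ (ω : Ω) (v : Fin p → ℝ),
        (∑ m' : Fin (M + 1),
          expWeight pri 1 (fun m'' j => crossEntropy (y j ω) (ghat m'' (x j ω))) m' i
            * ghat m' v)
        = mixK pri ghat
            (fun j : ↥(Finset.Iio i) => (x (j : Fin n) ω, y (j : Fin n) ω)) v := by
      intro ω v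
      refine Finset.sum_congr rfl fun m' _ => ?_
      congr 1
      have hws : ∀ m'' : Fin (M + 1),
          wSumK ghat (fun j : ↥(Finset.Iio i) => (x (j : Fin n) ω, y (j : Fin n) ω)) m''
          = ∑ j ∈ Finset.Iio i, crossEntropy (y j ω) (ghat m'' (x j ω)) := fun m'' =>
        Finset.sum_coe_sort (Finset.Iio i)
          (fun j => crossEntropy (y j ω) (ghat m'' (x j ω)))
      show pri m' * Real.exp
            (-1 * ∑ j ∈ Finset.Iio i, crossEntropy (y j ω) (ghat m' (x j ω))) /
          (∑ m'' : Fin (M + 1), pri m'' * Real.exp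
            (-1 * ∑ j ∈ Finset.Iio i, crossEntropy (y j ω) (ghat m'' (x j ω))))
        = pri m' * Real.exp (-1 * wSumK ghat
            (fun j : ↥(Finset.Iio i) => (x (j : Fin n) ω, y (j : Fin n) ω)) m') /
          (∑ m'' : Fin (M + 1), pri m'' * Real.exp (-1 * wSumK ghat
            (fun j : ↥(Finset.Iio i) => (x (j : Fin n) ω, y (j : Fin n) ω)) m''))
      simp only [hws]
    simp only [hfact]
    -- measurability
    have hZmeas : Measurable (fun ω => (x i ω, y i ω)) := (hxmeas i).prodMk (hymeas i)
    have hWmeas : Measurable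
        (fun ω (j : ↥(Finset.Iio i)) => (x (j : Fin n) ω, y (j : Fin n) ω)) :=
      measurable_pi_lambda _ fun j => (hxmeas _).prodMk (hymeas _)
    have hFmeas : Measurable
        (fun q : ((↥(Finset.Iio i) → (Fin p → ℝ) × ℝ) × ((Fin p → ℝ) × ℝ)) =>
          ENNReal.ofReal (crossEntropy q.2.2 (mixK pri ghat q.1 q.2.1))) :=
      (measurable_crossEntropy'.comp ((measurable_snd.snd).prodMk
        ((measurable_mixK hghatmeas).comp
          (measurable_fst.prodMk measurable_snd.fst)))).ennreal_ofReal
    have hGmeas : Measurable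
        (fun q : ((↥(Finset.Iio i) → (Fin p → ℝ) × ℝ) × (Fin p → ℝ)) =>
          ENNReal.ofReal (-(g q.2 * Real.log (mixK pri ghat q.1 q.2))
            - (1 - g q.2) * Real.log (1 - mixK pri ghat q.1 q.2))) := by
      have hmix : Measurable
          (fun q : ((↥(Finset.Iio i) → (Fin p → ℝ) × ℝ) × (Fin p → ℝ)) =>
            mixK pri ghat q.1 q.2) := measurable_mixK hghatmeas
      exact ((((hgmeas.comp measurable_snd).mul (Real.measurable_log.comp hmix)).neg).sub
        ((measurable_const.sub (hgmeas.comp measurable_snd)).mul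
          (Real.measurable_log.comp (measurable_const.sub hmix)))).ennreal_ofReal
    have hAmeas : Measurable (fun w : (↥(Finset.Iio i) → (Fin p → ℝ) × ℝ) =>
        ∫⁻ v, ENNReal.ofReal (-(g v * Real.log (mixK pri ghat w v))
          - (1 - g v) * Real.log (1 - mixK pri ghat w v)) ∂μ) :=
      hGmeas.lintegral_prod_right'
    -- independence
    have hIndep : IndepFun
        (fun ω (j : ↥(Finset.Iio i)) => (x (j : Fin n) ω, y (j : Fin n) ω))
        (fun ω => (x i ω, y i ω)) P := by
      have h0 := hindep.indepFun_finset (Finset.Iio i) {i}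
        (by simp [Finset.disjoint_singleton_right])
        (fun j => (hxmeas j).prodMk (hymeas j))
      exact h0.comp measurable_id
        (measurable_pi_apply (⟨i, Finset.mem_singleton_self i⟩ : (({i} : Finset (Fin n)))))
    haveI hPW : IsProbabilityMeasure (Measure.map
        (fun ω (j : ↥(Finset.Iio i)) => (x (j : Fin n) ω, y (j : Fin n) ω)) P) :=
      Measure.isProbabilityMeasure_map hWmeas.aemeasurable
    haveI hPZ : IsProbabilityMeasure (Measure.map (fun ω => (x i ω, y i ω)) P) :=
      Measure.isProbabilityMeasure_map hZmeas.aemeasurable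
    have hmapprod : Measure.map (fun ω =>
          ((fun (j : ↥(Finset.Iio i)) => (x (j : Fin n) ω, y (j : Fin n) ω)),
            (x i ω, y i ω))) P
        = (Measure.map
            (fun ω (j : ↥(Finset.Iio i)) => (x (j : Fin n) ω, y (j : Fin n) ω)) P).prod
          (Measure.map (fun ω => (x i ω, y i ω)) P) :=
      (indepFun_iff_map_prod_eq_prod_map_map hWmeas.aemeasurable hZmeas.aemeasurable).mp
        hIndep
    calc ∫⁻ ω, ∫⁻ v, ENNReal.ofReal
            (-(g v * Real.log (mixK pri ghat
                (fun j : ↥(Finset.Iio i) => (x (j : Fin n) ω, y (j : Fin n) ω)) v))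
              - (1 - g v) * Real.log (1 - mixK pri ghat
                (fun j : ↥(Finset.Iio i) => (x (j : Fin n) ω, y (j : Fin n) ω)) v)) ∂μ ∂P
        = ∫⁻ w, ∫⁻ v, ENNReal.ofReal (-(g v * Real.log (mixK pri ghat w v))
            - (1 - g v) * Real.log (1 - mixK pri ghat w v)) ∂μ
            ∂(Measure.map
              (fun ω (j : ↥(Finset.Iio i)) => (x (j : Fin n) ω, y (j : Fin n) ω)) P) :=
          (lintegral_map hAmeas hWmeas).symm
      _ = ∫⁻ w, ∫⁻ ω, ENNReal.ofReal
            (crossEntropy (y i ω) (mixK pri ghat w (x i ω))) ∂P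
            ∂(Measure.map
              (fun ω (j : ↥(Finset.Iio i)) => (x (j : Fin n) ω, y (j : Fin n) ω)) P) :=
          lintegral_congr fun w =>
            (core_crossEntropy hgmeas hg01 (hxmeas i) (hymeas i) (hxlaw i) (hy01 i)
              (hycond i)
              ((measurable_mixK hghatmeas).comp (measurable_const.prodMk measurable_id))
              (fun v => mixK_mem hpri hghatr w v)).symm
      _ = ∫⁻ w, ∫⁻ z, ENNReal.ofReal (crossEntropy z.2 (mixK pri ghat w z.1))
            ∂(Measure.map (fun ω => (x i ω, y i ω)) P)
            ∂(Measure.map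
              (fun ω (j : ↥(Finset.Iio i)) => (x (j : Fin n) ω, y (j : Fin n) ω)) P) :=
          lintegral_congr fun w =>
            (lintegral_map (hFmeas.comp measurable_prodMk_left) hZmeas).symm
      _ = ∫⁻ q, ENNReal.ofReal (crossEntropy q.2.2 (mixK pri ghat q.1 q.2.1))
            ∂((Measure.map
                (fun ω (j : ↥(Finset.Iio i)) => (x (j : Fin n) ω, y (j : Fin n) ω)) P).prod
              (Measure.map (fun ω => (x i ω, y i ω)) P)) :=
          (lintegral_prod _ hFmeas.aemeasurable).symm
      _ = ∫⁻ q, ENNReal.ofReal (crossEntropy q.2.2 (mixK pri ghat q.1 q.2.1))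
            ∂(Measure.map (fun ω =>
              ((fun (j : ↥(Finset.Iio i)) => (x (j : Fin n) ω, y (j : Fin n) ω)),
                (x i ω, y i ω))) P) := by rw [hmapprod]
      _ = ∫⁻ ω, ENNReal.ofReal (crossEntropy (y i ω) (mixK pri ghat
            (fun j : ↥(Finset.Iio i) => (x (j : Fin n) ω, y (j : Fin n) ω)) (x i ω))) ∂P :=
          lintegral_map hFmeas (hWmeas.prodMk hZmeas)
  -- Step 3: pointwise telescoping
  have htel : ∀ ω : Ω,
      ∑ i : Fin n, crossEntropy (y i ω)
        (∑ m' : Fin (M + 1),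
          expWeight pri 1 (fun m'' j => crossEntropy (y j ω) (ghat m'' (x j ω))) m' i
            * ghat m' (x i ω))
      ≤ Real.log (1 / pri m)
        + ∑ i : Fin n, crossEntropy (y i ω) (ghat m (x i ω)) := by
    intro ω
    exact telescope hpri hpri1 _
      (fun i => exp_neg_crossEntropy_mix (hy01 i ω)
        (fun m' => expWeight_pos hpri 1 m' i) (expWeight_sum_one hpri 1 i)
        (fun m' => hghatr m' (x i ω))) m
  -- measurability of the benchmark losses
  have hbmeas : ∀ i : Fin n, Measurable fun ω =>
      ENNReal.ofReal (crossEntropy (y i ω) (ghat m (x i ω))) := fun i =>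
    (measurable_crossEntropy'.comp
      ((hymeas i).prodMk ((hghatmeas m).comp (hxmeas i)))).ennreal_ofReal
  -- Step 4: integrated telescoping
  have main2 : ∑ i : Fin n, ∫⁻ ω, ENNReal.ofReal (crossEntropy (y i ω)
        (∑ m' : Fin (M + 1),
          expWeight pri 1 (fun m'' j => crossEntropy (y j ω) (ghat m'' (x j ω))) m' i
            * ghat m' (x i ω))) ∂P
      ≤ ENNReal.ofReal (Real.log (1 / pri m))
        + ∑ i : Fin n, ∫⁻ ω, ENNReal.ofReal (crossEntropy (y i ω) (ghat m (x i ω))) ∂P := by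
    calc ∑ i : Fin n, ∫⁻ ω, ENNReal.ofReal (crossEntropy (y i ω)
          (∑ m' : Fin (M + 1),
            expWeight pri 1 (fun m'' j => crossEntropy (y j ω) (ghat m'' (x j ω))) m' i
              * ghat m' (x i ω))) ∂P
        ≤ ∫⁻ ω, ∑ i : Fin n, ENNReal.ofReal (crossEntropy (y i ω)
            (∑ m' : Fin (M + 1),
              expWeight pri 1 (fun m'' j => crossEntropy (y j ω) (ghat m'' (x j ω))) m' i
                * ghat m' (x i ω))) ∂P := sum_lintegral_le P Finset.univ _
      _ ≤ ∫⁻ ω, (ENNReal.ofReal (Real.log (1 / pri m))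
            + ∑ i : Fin n, ENNReal.ofReal (crossEntropy (y i ω) (ghat m (x i ω)))) ∂P := by
          refine lintegral_mono fun ω => ?_
          rw [← ENNReal.ofReal_sum_of_nonneg (fun i _ =>
            crossEntropy_nonneg (hy01 i ω) (hmix01 i ω (x i ω)).1 (hmix01 i ω (x i ω)).2),
            ← ENNReal.ofReal_sum_of_nonneg (fun i _ =>
            crossEntropy_nonneg (hy01 i ω) (hghatr m (x i ω)).1 (hghatr m (x i ω)).2),
            ← ENNReal.ofReal_add hlog_nonneg (Finset.sum_nonneg (fun i _ =>
            crossEntropy_nonneg (hy01 i ω) (hghatr m (x i ω)).1 (hghatr m (x i ω)).2))]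
          exact ENNReal.ofReal_le_ofReal (htel ω)
      _ = ENNReal.ofReal (Real.log (1 / pri m))
            + ∑ i : Fin n, ∫⁻ ω, ENNReal.ofReal (crossEntropy (y i ω) (ghat m (x i ω))) ∂P := by
          rw [lintegral_add_left measurable_const, lintegral_const, measure_univ, mul_one,
            lintegral_finset_sum _ (fun i _ => hbmeas i)]
  -- Step 5: benchmark loss identity
  have hb : ∀ i : Fin n, ∫⁻ ω, ENNReal.ofReal (crossEntropy (y i ω) (ghat m (x i ω))) ∂P
      = ∫⁻ v, ENNReal.ofReal
          (-(g v * Real.log (ghat m v)) - (1 - g v) * Real.log (1 - ghat m v)) ∂μ :=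
    fun i => core_crossEntropy hgmeas hg01 (hxmeas i) (hymeas i) (hxlaw i) (hy01 i)
      (hycond i) (hghatmeas m) (fun v => hghatr m v)
  -- finiteness of the entropy term
  have hHfin : (n : ℝ≥0∞) * (∫⁻ v, ENNReal.ofReal
      (-(g v * Real.log (g v)) - (1 - g v) * Real.log (1 - g v)) ∂μ) ≠ ⊤ := by
    have hle : (n : ℝ≥0∞) * (∫⁻ v, ENNReal.ofReal
        (-(g v * Real.log (g v)) - (1 - g v) * Real.log (1 - g v)) ∂μ) ≤ (n : ℝ≥0∞) := by
      calc (n : ℝ≥0∞) * _ ≤ (n : ℝ≥0∞) * 1 :=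
            mul_le_mul_right (ent_lintegral_le_one μ g hg01) _
        _ = n := mul_one _
    exact ne_top_of_le_ne_top (ENNReal.natCast_ne_top n) hle
  -- final assembly
  rw [← ENNReal.add_le_add_iff_right hHfin]
  calc (∑ i : Fin n, ∫⁻ ω, bernoulliKL μ g
          (fun v => ∑ m' : Fin (M + 1),
            expWeight pri 1 (fun m'' j => crossEntropy (y j ω) (ghat m'' (x j ω))) m' i
              * ghat m' v) ∂P)
        + (n : ℝ≥0∞) * (∫⁻ v, ENNReal.ofReal
            (-(g v * Real.log (g v)) - (1 - g v) * Real.log (1 - g v)) ∂μ)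
      = ∑ i : Fin n, ((∫⁻ ω, bernoulliKL μ g
          (fun v => ∑ m' : Fin (M + 1),
            expWeight pri 1 (fun m'' j => crossEntropy (y j ω) (ghat m'' (x j ω))) m' i
              * ghat m' v) ∂P)
          + ∫⁻ v, ENNReal.ofReal
            (-(g v * Real.log (g v)) - (1 - g v) * Real.log (1 - g v)) ∂μ) := by
        rw [Finset.sum_add_distrib, Finset.sum_const, Finset.card_univ, Fintype.card_fin,
          nsmul_eq_mul]
    _ = ∑ i : Fin n, ∫⁻ ω, ∫⁻ v, ENNReal.ofReal
          (-(g v * Real.log (∑ m' : Fin (M + 1),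
              expWeight pri 1 (fun m'' j => crossEntropy (y j ω) (ghat m'' (x j ω))) m' i
                * ghat m' v))
            - (1 - g v) * Real.log (1 - ∑ m' : Fin (M + 1),
              expWeight pri 1 (fun m'' j => crossEntropy (y j ω) (ghat m'' (x j ω))) m' i
                * ghat m' v)) ∂μ ∂P := by
        refine Finset.sum_congr rfl fun i _ => ?_
        calc (∫⁻ ω, bernoulliKL μ g
              (fun v => ∑ m' : Fin (M + 1),
                expWeight pri 1 (fun m'' j => crossEntropy (y j ω) (ghat m'' (x j ω))) m' i
                  * ghat m' v) ∂P)
              + ∫⁻ v, ENNReal.ofReal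
                (-(g v * Real.log (g v)) - (1 - g v) * Real.log (1 - g v)) ∂μ
            = ∫⁻ ω, (bernoulliKL μ g
              (fun v => ∑ m' : Fin (M + 1),
                expWeight pri 1 (fun m'' j => crossEntropy (y j ω) (ghat m'' (x j ω))) m' i
                  * ghat m' v)
              + ∫⁻ v, ENNReal.ofReal
                (-(g v * Real.log (g v)) - (1 - g v) * Real.log (1 - g v)) ∂μ) ∂P := by
              rw [lintegral_add_right _ measurable_const, lintegral_const, measure_univ,
                mul_one]
          _ = ∫⁻ ω, ∫⁻ v, ENNReal.ofReal
                (-(g v * Real.log (∑ m' : Fin (M + 1),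
                    expWeight pri 1 (fun m'' j =>
                      crossEntropy (y j ω) (ghat m'' (x j ω))) m' i * ghat m' v))
                  - (1 - g v) * Real.log (1 - ∑ m' : Fin (M + 1),
                    expWeight pri 1 (fun m'' j =>
                      crossEntropy (y j ω) (ghat m'' (x j ω))) m' i * ghat m' v)) ∂μ ∂P :=
              lintegral_congr fun ω => hstep1 i ω
    _ = ∑ i : Fin n, ∫⁻ ω, ENNReal.ofReal (crossEntropy (y i ω)
          (∑ m' : Fin (M + 1),
            expWeight pri 1 (fun m'' j => crossEntropy (y j ω) (ghat m'' (x j ω))) m' i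
              * ghat m' (x i ω))) ∂P := Finset.sum_congr rfl fun i _ => key i
    _ ≤ ENNReal.ofReal (Real.log (1 / pri m))
          + ∑ i : Fin n, ∫⁻ ω, ENNReal.ofReal (crossEntropy (y i ω) (ghat m (x i ω))) ∂P :=
        main2
    _ = ENNReal.ofReal (Real.log (1 / pri m))
          + (n : ℝ≥0∞) * ∫⁻ v, ENNReal.ofReal
            (-(g v * Real.log (ghat m v)) - (1 - g v) * Real.log (1 - ghat m v)) ∂μ := by
        rw [Finset.sum_congr rfl (fun i _ => hb i), Finset.sum_const, Finset.card_univ,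
          Fintype.card_fin, nsmul_eq_mul]
    _ = ENNReal.ofReal (Real.log (1 / pri m))
          + (n : ℝ≥0∞) * (bernoulliKL μ g (ghat m)
            + ∫⁻ v, ENNReal.ofReal
              (-(g v * Real.log (g v)) - (1 - g v) * Real.log (1 - g v)) ∂μ) := by
        rw [kl_add_ent μ g hgmeas hg01 (ghat m) (fun v => hghatr m v)]
    _ = (ENNReal.ofReal (Real.log (1 / pri m)) + (n : ℝ≥0∞) * bernoulliKL μ g (ghat m))
          + (n : ℝ≥0∞) * (∫⁻ v, ENNReal.ofReal
            (-(g v * Real.log (g v)) - (1 - g v) * Real.log (1 - g v)) ∂μ) := by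
        ring
end
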